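/- In the variable-length source encryption setting with i.i.d. source p_X and i.i.d. key p_K, if a rate R is δ-admissible for some δ > 0, then H(p_K) ≥ H(p_X). -/

import Mathlib

/-- Base-2 Shannon entropy of the pushforward of `p` under `f`. -/
noncomputable def entF {Ω β : Type*} [Fintype Ω] [DecidableEq β]
    (p : Ω → ℝ) (f : Ω → β) : ℝ :=
  -∑ b ∈ Finset.image f Finset.univ,
    (∑ ω ∈ Finset.univ.filter (fun ω => f ω = b), p ω) *
      Real.logb 2 (∑ ω ∈ Finset.univ.filter (fun ω => f ω = b), p ω)

/-- i.i.d. product distribution on `𝒳ⁿ`. -/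
noncomputable def prodP {𝒳 : Type*} (p : 𝒳 → ℝ) {n : ℕ} (x : Fin n → 𝒳) : ℝ :=
  ∏ i, p (x i)

/-- Expected codeword (ciphertext) length `E[|Φ(Kⁿ, Xⁿ)|]` for an i.i.d. source
`pX` and i.i.d. key `pK`. -/
noncomputable def ELen {𝒳 : Type*} [Fintype 𝒳] [DecidableEq 𝒳] (pK pX : 𝒳 → ℝ)
    {n : ℕ} (Φ : (Fin n → 𝒳) → (Fin n → 𝒳) → List Bool) : ℝ :=
  ∑ k, ∑ x, prodP pK k * prodP pX x * ((Φ k x).length : ℝ)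

/-- Mutual-information leakage `I(C⁽ⁿ⁾; Xⁿ)` where `C⁽ⁿ⁾ = Φ(Kⁿ, Xⁿ)`,
`Kⁿ ∼ pK^n` and `Xⁿ ∼ pX^n` independent (base-2). -/
noncomputable def MIleak {𝒳 : Type*} [Fintype 𝒳] [DecidableEq 𝒳] (pK pX : 𝒳 → ℝ)
    {n : ℕ} (Φ : (Fin n → 𝒳) → (Fin n → 𝒳) → List Bool) : ℝ :=
  entF (fun ω : (Fin n → 𝒳) × (Fin n → 𝒳) => prodP pK ω.1 * prodP pX ω.2)
      (fun ω => Φ ω.1 ω.2)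
    + entF (fun ω : (Fin n → 𝒳) × (Fin n → 𝒳) => prodP pK ω.1 * prodP pX ω.2)
      (fun ω => ω.2)
    - entF (fun ω : (Fin n → 𝒳) × (Fin n → 𝒳) => prodP pK ω.1 * prodP pX ω.2)
      (fun ω => (Φ ω.1 ω.2, ω.2))

/-- `R` is `δ`-admissible: there is a sequence of encryption/decryption pairs
with perfect decryption such that for every `γ > 0`, eventually
`(1/n)·E[|Φ_K⁽ⁿ⁾(Xⁿ)|] ≤ R + γ` and `I(C⁽ⁿ⁾; Xⁿ) ≤ δ`. -/
def Admissible {𝒳 : Type*} [Fintype 𝒳] [DecidableEq 𝒳] (pX pK : 𝒳 → ℝ)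
    (δ R : ℝ) : Prop :=
  ∃ Φ : (n : ℕ) → (Fin n → 𝒳) → (Fin n → 𝒳) → List Bool,
    ∃ Ψ : (n : ℕ) → (Fin n → 𝒳) → List Bool → (Fin n → 𝒳),
      (∀ n k x, Ψ n k (Φ n k x) = x) ∧
      ∀ γ : ℝ, 0 < γ → ∃ n₀ : ℕ, ∀ n ≥ n₀,
        (1 / (n : ℝ)) * ELen pK pX (Φ n) ≤ R + γ ∧ MIleak pK pX (Φ n) ≤ δ


set_option linter.unusedSectionVars false

section helper
variable {Ω β γ : Type*} [Fintype Ω] [DecidableEq β] [DecidableEq γ]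

/-- Generic fiber-sum identity. -/
lemma sum_fiber_mul (p : Ω → ℝ) (f : Ω → β) (h : β → ℝ) :
    ∑ b ∈ Finset.image f Finset.univ,
      (∑ ω ∈ Finset.univ.filter (fun ω => f ω = b), p ω) * h b
    = ∑ ω, p ω * h (f ω) := by
  rw [← Finset.sum_fiberwise_of_maps_to (g := f)
      (fun x _ => Finset.mem_image_of_mem f (Finset.mem_univ x))
      (fun ω => p ω * h (f ω))]
  refine Finset.sum_congr rfl fun b hb => ?_
  rw [Finset.sum_mul]
  refine Finset.sum_congr rfl fun ω hω => ?_
  rw [(Finset.mem_filter.mp hω).2]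

/-- mass of the fiber through ω. -/
noncomputable def mass (p : Ω → ℝ) (f : Ω → β) (ω : Ω) : ℝ :=
  ∑ ω' ∈ Finset.univ.filter (fun ω' => f ω' = f ω), p ω'

lemma entF_eq_sum (p : Ω → ℝ) (f : Ω → β) :
    entF p f = -∑ ω, p ω * Real.logb 2 (mass p f ω) := by
  unfold entF
  congr 1
  rw [sum_fiber_mul p f
    (fun b => Real.logb 2 (∑ ω ∈ Finset.univ.filter (fun ω => f ω = b), p ω))]
  rfl
end helper

section helper2
variable {Ω β γ : Type*} [Fintype Ω] [DecidableEq β] [DecidableEq γ]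

lemma mass_nonneg (p : Ω → ℝ) (hp : ∀ ω, 0 ≤ p ω) (f : Ω → β) (ω : Ω) :
    0 ≤ mass p f ω :=
  Finset.sum_nonneg fun ω' _ => hp ω'

lemma self_le_mass (p : Ω → ℝ) (hp : ∀ ω, 0 ≤ p ω) (f : Ω → β) (ω : Ω) :
    p ω ≤ mass p f ω :=
  Finset.single_le_sum (fun ω' _ => hp ω')
    (Finset.mem_filter.mpr ⟨Finset.mem_univ ω, rfl⟩)

/-- entropy decreases under pushforward (merging). -/
lemma entF_mono (p : Ω → ℝ) (hp : ∀ ω, 0 ≤ p ω) (f : Ω → β) (g : Ω → γ)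
    (φ : γ → β) (hfg : ∀ ω, f ω = φ (g ω)) :
    entF p f ≤ entF p g := by
  rw [entF_eq_sum, entF_eq_sum]
  apply neg_le_neg
  apply Finset.sum_le_sum
  intro ω _
  rcases eq_or_lt_of_le (hp ω) with h0 | h0
  · rw [← h0]; simp
  · have hg : 0 < mass p g ω := lt_of_lt_of_le h0 (self_le_mass p hp g ω)
    have hsub : mass p g ω ≤ mass p f ω := by
      apply Finset.sum_le_sum_of_subset_of_nonneg
      · intro ω' hω'
        simp only [Finset.mem_filter, Finset.mem_univ, true_and] at *
        rw [hfg, hfg, hω']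
      · intro ω' _ _; exact hp ω'
    exact mul_le_mul_of_nonneg_left
      (Real.logb_le_logb_of_le one_lt_two hg hsub) (le_of_lt h0)

/-- entropy is preserved when fibers coincide. -/
lemma entF_congr_fiber (p : Ω → ℝ) (f : Ω → β) (g : Ω → γ)
    (h : ∀ ω ω', f ω' = f ω ↔ g ω' = g ω) :
    entF p f = entF p g := by
  rw [entF_eq_sum, entF_eq_sum]
  congr 1
  refine Finset.sum_congr rfl fun ω _ => ?_
  unfold mass
  have : (Finset.univ.filter (fun ω' => f ω' = f ω))
      = Finset.univ.filter (fun ω' => g ω' = g ω) :=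
    Finset.filter_congr fun ω' _ => by simp [h ω ω']
  rw [this]

/-- Gibbs' inequality. -/
lemma gibbs_ineq {ι : Type*} (s : Finset ι) (p q : ι → ℝ)
    (hp : ∀ b ∈ s, 0 ≤ p b) (hq : ∀ b ∈ s, 0 ≤ q b)
    (hpq : ∀ b ∈ s, 0 < p b → 0 < q b)
    (hp1 : ∑ b ∈ s, p b = 1) (hq1 : ∑ b ∈ s, q b ≤ 1) :
    ∑ b ∈ s, p b * Real.logb 2 (q b) ≤ ∑ b ∈ s, p b * Real.logb 2 (p b) := by
  have hlog2 : (0:ℝ) < Real.log 2 := Real.log_pos one_lt_two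
  have key : ∀ b ∈ s, p b * Real.log (q b) - p b * Real.log (p b) ≤ q b - p b := by
    intro b hb
    rcases eq_or_lt_of_le (hp b hb) with h0 | h0
    · rw [← h0]; simpa using hq b hb
    · have hqb := hpq b hb h0
      have hle := Real.log_le_sub_one_of_pos (div_pos hqb h0)
      rw [Real.log_div hqb.ne' h0.ne'] at hle
      have h3 := mul_le_mul_of_nonneg_left hle (le_of_lt h0)
      have h4 : p b * (q b / p b) = q b := by field_simp
      rw [mul_sub, mul_sub, h4, mul_one] at h3
      linarith
  have h2 : ∑ b ∈ s, (p b * Real.log (q b) - p b * Real.log (p b)) ≤ 0 := by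
    calc ∑ b ∈ s, (p b * Real.log (q b) - p b * Real.log (p b))
        ≤ ∑ b ∈ s, (q b - p b) := Finset.sum_le_sum key
      _ = (∑ b ∈ s, q b) - ∑ b ∈ s, p b := by rw [Finset.sum_sub_distrib]
      _ ≤ 0 := by rw [hp1]; linarith
  simp only [Real.logb]
  have e1 : ∀ x y : ℝ, x * (Real.log y / Real.log 2) = x * Real.log y / Real.log 2 :=
    fun x y => (mul_div_assoc _ _ _).symm
  simp only [e1, ← Finset.sum_div]
  have h2' : ∑ b ∈ s, p b * Real.log (q b) ≤ ∑ b ∈ s, p b * Real.log (p b) := by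
    have := Finset.sum_sub_distrib (s := s)
      (f := fun b => p b * Real.log (q b)) (g := fun b => p b * Real.log (p b))
    linarith [h2, this.symm ▸ h2]
  exact (div_le_div_iff_of_pos_right hlog2).mpr h2'

end helper2

section subadd
variable {Ω β γ : Type*} [Fintype Ω] [DecidableEq β] [DecidableEq γ]

lemma mul_mul_logb (t s : ℝ) (ht : 0 ≤ t) (hs : 0 ≤ s) :
    t * s * Real.logb 2 (t * s) = t * s * Real.logb 2 t + t * s * Real.logb 2 s := by
  rcases eq_or_lt_of_le ht with h0 | h0
  · rw [← h0]; ring_nf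
  rcases eq_or_lt_of_le hs with h1 | h1
  · rw [← h1]; ring_nf
  rw [Real.logb_mul h0.ne' h1.ne', mul_add]

/-- subadditivity of entropy -/
lemma entF_pair_le (p : Ω → ℝ) (hp : ∀ ω, 0 ≤ p ω) (hp1 : ∑ ω, p ω = 1)
    (f : Ω → β) (g : Ω → γ) :
    entF p (fun ω => (f ω, g ω)) ≤ entF p f + entF p g := by
  classical
  set fg : Ω → β × γ := fun ω => (f ω, g ω) with hfgdef
  set s := Finset.image fg Finset.univ with hs
  set J : β × γ → ℝ := fun bc => ∑ ω ∈ Finset.univ.filter (fun ω => fg ω = bc), p ω with hJ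
  set F : β → ℝ := fun b => ∑ ω ∈ Finset.univ.filter (fun ω => f ω = b), p ω with hF
  set G : γ → ℝ := fun c => ∑ ω ∈ Finset.univ.filter (fun ω => g ω = c), p ω with hG
  have hJnonneg : ∀ bc, 0 ≤ J bc := fun bc => Finset.sum_nonneg fun ω _ => hp ω
  have hFnonneg : ∀ b, 0 ≤ F b := fun b => Finset.sum_nonneg fun ω _ => hp ω
  have hGnonneg : ∀ c, 0 ≤ G c := fun c => Finset.sum_nonneg fun ω _ => hp ω
  have hJF : ∀ bc, J bc ≤ F bc.1 := by
    intro bc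
    apply Finset.sum_le_sum_of_subset_of_nonneg
    · intro ω hω
      simp only [Finset.mem_filter, Finset.mem_univ, true_and, hfgdef] at *
      rw [← hω]
    · intro ω _ _; exact hp ω
  have hJG : ∀ bc, J bc ≤ G bc.2 := by
    intro bc
    apply Finset.sum_le_sum_of_subset_of_nonneg
    · intro ω hω
      simp only [Finset.mem_filter, Finset.mem_univ, true_and, hfgdef] at *
      rw [← hω]
    · intro ω _ _; exact hp ω
  -- entF p f expressed as a sum over s
  have hef : entF p f = -∑ bc ∈ s, J bc * Real.logb 2 (F bc.1) := by
    unfold entF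
    congr 1
    rw [sum_fiber_mul p fg (fun bc => Real.logb 2 (F bc.1)),
        sum_fiber_mul p f (fun b => Real.logb 2 (F b))]
  have heg : entF p g = -∑ bc ∈ s, J bc * Real.logb 2 (G bc.2) := by
    unfold entF
    congr 1
    rw [sum_fiber_mul p fg (fun bc => Real.logb 2 (G bc.2)),
        sum_fiber_mul p g (fun c => Real.logb 2 (G c))]
  have hJ1 : ∑ bc ∈ s, J bc = 1 := by
    have := sum_fiber_mul p fg (fun _ => (1:ℝ))
    simpa [hp1] using this
  have hq1 : ∑ bc ∈ s, F bc.1 * G bc.2 ≤ 1 := by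
    have hsub : s ⊆ (Finset.image f Finset.univ) ×ˢ (Finset.image g Finset.univ) := by
      intro bc hbc
      simp only [hs, Finset.mem_image, Finset.mem_univ, true_and] at hbc
      obtain ⟨ω, hω⟩ := hbc
      simp only [Finset.mem_product, Finset.mem_image, Finset.mem_univ, true_and]
      exact ⟨⟨ω, by rw [← hω]⟩, ⟨ω, by rw [← hω]⟩⟩
    have hF1 : ∑ b ∈ Finset.image f Finset.univ, F b = 1 := by
      have := sum_fiber_mul p f (fun _ => (1:ℝ))
      simpa [hp1] using this
    have hG1 : ∑ c ∈ Finset.image g Finset.univ, G c = 1 := by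
      have := sum_fiber_mul p g (fun _ => (1:ℝ))
      simpa [hp1] using this
    calc ∑ bc ∈ s, F bc.1 * G bc.2
        ≤ ∑ bc ∈ (Finset.image f Finset.univ) ×ˢ (Finset.image g Finset.univ),
            F bc.1 * G bc.2 :=
          Finset.sum_le_sum_of_subset_of_nonneg hsub
            (fun bc _ _ => mul_nonneg (hFnonneg _) (hGnonneg _))
      _ = (∑ b ∈ Finset.image f Finset.univ, F b) *
            (∑ c ∈ Finset.image g Finset.univ, G c) := by
          rw [Finset.sum_product, Finset.sum_mul_sum]
      _ = 1 := by rw [hF1, hG1, mul_one]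
  have hgibbs : ∑ bc ∈ s, J bc * Real.logb 2 (F bc.1 * G bc.2)
      ≤ ∑ bc ∈ s, J bc * Real.logb 2 (J bc) := by
    apply gibbs_ineq s J (fun bc => F bc.1 * G bc.2) (fun bc _ => hJnonneg bc)
      (fun bc _ => mul_nonneg (hFnonneg _) (hGnonneg _)) ?_ hJ1 hq1
    intro bc _ hJpos
    exact mul_pos (lt_of_lt_of_le hJpos (hJF bc)) (lt_of_lt_of_le hJpos (hJG bc))
  have hsplit : ∀ bc ∈ s, J bc * Real.logb 2 (F bc.1 * G bc.2)
      = J bc * Real.logb 2 (F bc.1) + J bc * Real.logb 2 (G bc.2) := by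
    intro bc _
    rcases eq_or_lt_of_le (hJnonneg bc) with h0 | h0
    · rw [← h0]; ring
    · rw [Real.logb_mul (lt_of_lt_of_le h0 (hJF bc)).ne'
          (lt_of_lt_of_le h0 (hJG bc)).ne', mul_add]
  have hefg : entF p fg = -∑ bc ∈ s, J bc * Real.logb 2 (J bc) := rfl
  rw [hef, heg, hefg]
  have := Finset.sum_congr rfl hsplit
  rw [Finset.sum_add_distrib] at this
  linarith [hgibbs]
end subadd

section prodlem
variable {𝒳 : Type*} [Fintype 𝒳] [DecidableEq 𝒳]

lemma prodP_nonneg (p : 𝒳 → ℝ) (hp : ∀ x, 0 ≤ p x) {n : ℕ} (x : Fin n → 𝒳) :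
    0 ≤ prodP p x :=
  Finset.prod_nonneg fun i _ => hp (x i)

lemma prodP_cons (p : 𝒳 → ℝ) {n : ℕ} (a : 𝒳) (y : Fin n → 𝒳) :
    prodP p (Fin.cons a y) = p a * prodP p y := by
  unfold prodP
  rw [Fin.prod_univ_succ]
  simp

lemma sum_pi_succ {n : ℕ} (F : (Fin (n+1) → 𝒳) → ℝ) :
    ∑ x : Fin (n+1) → 𝒳, F x = ∑ a : 𝒳, ∑ y : Fin n → 𝒳, F (Fin.cons a y) := by
  rw [← Equiv.sum_comp (Fin.consEquiv (fun _ : Fin (n+1) => 𝒳)) F, Fintype.sum_prod_type]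
  refine Finset.sum_congr rfl fun a _ => Finset.sum_congr rfl fun y _ => ?_
  congr 1

lemma sum_prodP (p : 𝒳 → ℝ) (hp1 : ∑ x, p x = 1) (n : ℕ) :
    ∑ x : Fin n → 𝒳, prodP p x = 1 := by
  induction n with
  | zero => simp [prodP]
  | succ n ih =>
    rw [sum_pi_succ]
    simp only [prodP_cons]
    rw [← Finset.sum_mul_sum]
    rw [hp1, ih, mul_one]

lemma sum_prodP_logb (p : 𝒳 → ℝ) (hp : ∀ x, 0 ≤ p x) (hp1 : ∑ x, p x = 1) (n : ℕ) :
    ∑ x : Fin n → 𝒳, prodP p x * Real.logb 2 (prodP p x)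
      = (n : ℝ) * ∑ a, p a * Real.logb 2 (p a) := by
  induction n with
  | zero => simp [prodP]
  | succ n ih =>
    rw [sum_pi_succ]
    have key : ∀ (a : 𝒳) (y : Fin n → 𝒳),
        prodP p (Fin.cons a y) * Real.logb 2 (prodP p (Fin.cons a y))
        = p a * prodP p y * Real.logb 2 (p a)
          + p a * prodP p y * Real.logb 2 (prodP p y) := by
      intro a y
      rw [prodP_cons, mul_mul_logb _ _ (hp a) (prodP_nonneg p hp y)]
    simp only [key]
    rw [Finset.sum_congr rfl (fun a _ => Finset.sum_add_distrib)]
    rw [Finset.sum_add_distrib]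
    have e1 : ∑ a : 𝒳, ∑ y : Fin n → 𝒳, p a * prodP p y * Real.logb 2 (p a)
        = ∑ a : 𝒳, p a * Real.logb 2 (p a) := by
      refine Finset.sum_congr rfl fun a _ => ?_
      rw [← Finset.sum_mul, ← Finset.mul_sum, sum_prodP p hp1 n, mul_one]
    have e2 : ∑ a : 𝒳, ∑ y : Fin n → 𝒳, p a * prodP p y * Real.logb 2 (prodP p y)
        = (n : ℝ) * ∑ a, p a * Real.logb 2 (p a) := by
      have : ∀ a : 𝒳, ∑ y : Fin n → 𝒳, p a * prodP p y * Real.logb 2 (prodP p y)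
          = p a * ((n : ℝ) * ∑ b, p b * Real.logb 2 (p b)) := by
        intro a
        rw [← ih, Finset.mul_sum]
        exact Finset.sum_congr rfl fun y _ => by ring
      rw [Finset.sum_congr rfl (fun a _ => this a), ← Finset.sum_mul, hp1, one_mul]
    rw [e1, e2]
    push_cast
    ring
end prodlem

section main
variable {𝒳 : Type*} [Fintype 𝒳] [DecidableEq 𝒳]

lemma MI_lower (pX pK : 𝒳 → ℝ)
    (hpX : ∀ x, 0 ≤ pX x) (hpX1 : ∑ x, pX x = 1)
    (hpK : ∀ k, 0 ≤ pK k) (hpK1 : ∑ k, pK k = 1) (n : ℕ)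
    (Φ : (Fin n → 𝒳) → (Fin n → 𝒳) → List Bool)
    (Ψ : (Fin n → 𝒳) → List Bool → (Fin n → 𝒳))
    (hdec : ∀ k x, Ψ k (Φ k x) = x) :
    (n : ℝ) * ((-∑ x, pX x * Real.logb 2 (pX x)) - (-∑ k, pK k * Real.logb 2 (pK k)))
      ≤ MIleak pK pX Φ := by
  classical
  set dK := ∑ a, pK a * Real.logb 2 (pK a) with hdK
  set dX := ∑ a, pX a * Real.logb 2 (pX a) with hdX
  set w : (Fin n → 𝒳) × (Fin n → 𝒳) → ℝ :=
    fun ω => prodP pK ω.1 * prodP pX ω.2 with hwdef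
  have hw0 : ∀ ω, 0 ≤ w ω := fun ω =>
    mul_nonneg (prodP_nonneg pK hpK ω.1) (prodP_nonneg pX hpX ω.2)
  have hw1 : ∑ ω, w ω = 1 := by
    rw [Fintype.sum_prod_type]
    simp only [hwdef]
    rw [← Finset.sum_mul_sum, sum_prodP pK hpK1 n, sum_prodP pX hpX1 n, mul_one]
  -- masses
  have hmfst : ∀ ω, mass w (fun ω' => ω'.1) ω = prodP pK ω.1 := by
    intro ω
    rw [mass, Finset.sum_filter, Fintype.sum_prod_type]
    have e : ∀ k, (∑ x, if k = ω.1 then w (k, x) else 0)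
        = if k = ω.1 then prodP pK k else 0 := by
      intro k
      split_ifs with h
      · simp only [hwdef]
        rw [← Finset.mul_sum, sum_prodP pX hpX1 n, mul_one]
      · simp
    rw [Finset.sum_congr rfl fun k _ => e k]
    simp [Finset.sum_ite_eq']
  have hmsnd : ∀ ω, mass w (fun ω' => ω'.2) ω = prodP pX ω.2 := by
    intro ω
    rw [mass, Finset.sum_filter, Fintype.sum_prod_type]
    have e : ∀ k, (∑ x, if x = ω.2 then w (k, x) else 0)
        = prodP pK k * prodP pX ω.2 := by
      intro k
      rw [Finset.sum_ite_eq' Finset.univ ω.2 (fun x => w (k, x))]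
      simp [hwdef]
    rw [Finset.sum_congr rfl fun k _ => e k, ← Finset.sum_mul,
        sum_prodP pK hpK1 n, one_mul]
  have hmid : ∀ ω, mass w (fun ω' => ω') ω = w ω := by
    intro ω
    rw [mass]
    simp [Finset.filter_eq']
  -- entropies of fst, snd, id
  have hHfst : entF w (fun ω' => ω'.1) = -((n : ℝ) * dK) := by
    rw [entF_eq_sum]
    congr 1
    rw [Finset.sum_congr rfl fun ω _ => by rw [hmfst ω]]
    rw [Fintype.sum_prod_type]
    have e : ∀ k, (∑ x : Fin n → 𝒳, w (k, x) * Real.logb 2 (prodP pK k))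
        = prodP pK k * Real.logb 2 (prodP pK k) := by
      intro k
      simp only [hwdef]
      have : ∀ x : Fin n → 𝒳, prodP pK k * prodP pX x * Real.logb 2 (prodP pK k)
          = (prodP pK k * Real.logb 2 (prodP pK k)) * prodP pX x := fun x => by ring
      rw [Finset.sum_congr rfl fun x _ => this x, ← Finset.mul_sum,
          sum_prodP pX hpX1 n, mul_one]
    rw [Finset.sum_congr rfl fun k _ => e k, sum_prodP_logb pK hpK hpK1 n]
  have hHsnd : entF w (fun ω' => ω'.2) = -((n : ℝ) * dX) := by
    rw [entF_eq_sum]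
    congr 1
    rw [Finset.sum_congr rfl fun ω _ => by rw [hmsnd ω]]
    rw [Fintype.sum_prod_type]
    have e : ∀ k, (∑ x : Fin n → 𝒳, w (k, x) * Real.logb 2 (prodP pX x))
        = prodP pK k * ((n : ℝ) * dX) := by
      intro k
      simp only [hwdef]
      rw [← sum_prodP_logb pX hpX hpX1 n, Finset.mul_sum]
      exact Finset.sum_congr rfl fun x _ => by ring
    rw [Finset.sum_congr rfl fun k _ => e k, ← Finset.sum_mul,
        sum_prodP pK hpK1 n, one_mul]
  have hHid : entF w (fun ω' => ω') = -((n : ℝ) * dK + (n : ℝ) * dX) := by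
    rw [entF_eq_sum]
    rw [Finset.sum_congr rfl fun ω _ => by rw [hmid ω]]
    have e : ∀ ω, w ω * Real.logb 2 (w ω)
        = w ω * Real.logb 2 (prodP pK ω.1) + w ω * Real.logb 2 (prodP pX ω.2) := by
      intro ω
      exact mul_mul_logb _ _ (prodP_nonneg pK hpK ω.1) (prodP_nonneg pX hpX ω.2)
    rw [Finset.sum_congr rfl fun ω _ => e ω, Finset.sum_add_distrib]
    have h1 : ∑ ω, w ω * Real.logb 2 (prodP pK ω.1) = (n : ℝ) * dK := by
      have := hHfst
      rw [entF_eq_sum, Finset.sum_congr rfl fun ω _ => by rw [hmfst ω]] at this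
      linarith
    have h2 : ∑ ω, w ω * Real.logb 2 (prodP pX ω.2) = (n : ℝ) * dX := by
      have := hHsnd
      rw [entF_eq_sum, Finset.sum_congr rfl fun ω _ => by rw [hmsnd ω]] at this
      linarith
    rw [h1, h2]
  -- the chain
  set C : (Fin n → 𝒳) × (Fin n → 𝒳) → List Bool := fun ω => Φ ω.1 ω.2 with hC
  have st1 : entF w (fun ω => (Φ ω.1 ω.2, ω.2)) ≤ entF w (fun ω => (Φ ω.1 ω.2, ω.1)) := by
    apply entF_mono w hw0 _ _ (fun ck => (ck.1, Ψ ck.2 ck.1))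
    intro ω
    simp [hdec]
  have st2 : entF w (fun ω => (Φ ω.1 ω.2, ω.1)) = entF w (fun ω' => ω') := by
    apply entF_congr_fiber
    intro ω ω'
    constructor
    · intro h
      have h1 : ω'.1 = ω.1 := congrArg Prod.snd h
      have h2 : Φ ω'.1 ω'.2 = Φ ω.1 ω.2 := congrArg Prod.fst h
      have : ω'.2 = ω.2 := by
        have := hdec ω'.1 ω'.2
        rw [h2, h1] at this
        rw [← this, hdec]
      exact Prod.ext h1 this
    · intro h; rw [h]
  have st3 : entF w (fun ω => (Φ ω.1 ω.2, ω.1))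
      ≤ entF w C + entF w (fun ω' => ω'.1) :=
    entF_pair_le w hw0 hw1 C (fun ω' => ω'.1)
  have hCge : -((n : ℝ) * dX) ≤ entF w C := by
    rw [st2, hHid] at st3
    rw [hHfst] at st3
    linarith
  have hMI : MIleak pK pX Φ = entF w C + entF w (fun ω' => ω'.2)
      - entF w (fun ω => (Φ ω.1 ω.2, ω.2)) := rfl
  rw [hMI, hHsnd]
  rw [st2, hHid] at st1
  have goal_eq : (n : ℝ) * ((-dX) - (-dK)) = (n : ℝ) * dK - (n : ℝ) * dX := by ring
  rw [hdX, hdK] at *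
  linarith [hCge, st1]
end main


/-- Converse (key rate): if some rate `R` is `δ`-admissible for some `δ > 0`,
then `H(p_K) ≥ H(p_X)`. -/
theorem stmt_14 {𝒳 : Type*} [Fintype 𝒳] [DecidableEq 𝒳] (pX pK : 𝒳 → ℝ)
    (hpX : ∀ x, 0 ≤ pX x) (hpX1 : ∑ x, pX x = 1)
    (hpK : ∀ k, 0 ≤ pK k) (hpK1 : ∑ k, pK k = 1)
    (δ R : ℝ) (hδ : 0 < δ) (hadm : Admissible pX pK δ R) :
    (-∑ x, pX x * Real.logb 2 (pX x)) ≤ -∑ k, pK k * Real.logb 2 (pK k) := by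
  obtain ⟨Φ, Ψ, hdec, hrate⟩ := hadm
  by_contra hcon
  push_neg at hcon
  have hpos : 0 < (-∑ x, pX x * Real.logb 2 (pX x))
      - (-∑ k, pK k * Real.logb 2 (pK k)) := by linarith
  obtain ⟨n₀, hn₀⟩ := hrate 1 one_pos
  obtain ⟨m, hm⟩ := exists_nat_gt
    (δ / ((-∑ x, pX x * Real.logb 2 (pX x)) - (-∑ k, pK k * Real.logb 2 (pK k))))
  have h1 := (hn₀ (n₀ + m + 1) (by omega)).2
  have h2 := MI_lower pX pK hpX hpX1 hpK hpK1 (n₀ + m + 1)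
    (Φ (n₀ + m + 1)) (Ψ (n₀ + m + 1)) (hdec (n₀ + m + 1))
  have hNge : (m : ℝ) ≤ ((n₀ + m + 1 : ℕ) : ℝ) := by
    have : (m : ℕ) ≤ n₀ + m + 1 := by omega
    exact_mod_cast this
  have h3 : δ / ((-∑ x, pX x * Real.logb 2 (pX x))
      - (-∑ k, pK k * Real.logb 2 (pK k))) < ((n₀ + m + 1 : ℕ) : ℝ) :=
    lt_of_lt_of_le hm hNge
  have h4 := (div_lt_iff₀ hpos).mp h3
  linarith
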